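/- Fix real numbers a, b with 0 < a < 1 < b and b = a/(2a - 1) (so a > 1/2). Then for every integer d ≥ 1 and every κ ∈ (a, b), one has ((b/a)^d - 1)((b/a)^d + 1 - 2κ) > 0, and for every integer d ≤ -1 and every κ ∈ (a, b), one has ((b/a)^d - 1)((b/a)^d + 1 - 2κ) > 0. -/

import Mathlib

theorem diffusive_grid_positivity (a b : ℝ) (ha0 : 0 < a) (ha1 : a < 1) (hb1 : 1 < b)
    (hb : b = a / (2 * a - 1)) :
    (∀ d : ℤ, 1 ≤ d → ∀ κ ∈ Set.Ioo a b,
      ((b / a) ^ d - 1) * ((b / a) ^ d + 1 - 2 * κ) > 0) ∧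
    (∀ d : ℤ, d ≤ -1 → ∀ κ ∈ Set.Ioo a b,
      ((b / a) ^ d - 1) * ((b / a) ^ d + 1 - 2 * κ) > 0) := by
  have h2a : 0 < 2 * a - 1 := by
    by_contra h
    push_neg at h
    have : b ≤ 0 := hb ▸ div_nonpos_of_nonneg_of_nonpos ha0.le h
    linarith
  have hne : 2 * a - 1 ≠ 0 := ne_of_gt h2a
  have hkey : a + b = 2 * a * b := by
    have : b * (2 * a - 1) = a := by
      rw [hb]; exact div_mul_cancel₀ a hne
    nlinarith
  have hab : a < b := ha1.trans hb1
  have hbpos : 0 < b := lt_trans one_pos hb1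
  have hr : 1 < b / a := (one_lt_div ha0).2 hab
  have hba : b / a = 2 * b - 1 := by
    field_simp
    linarith
  have hab' : a / b = 2 * a - 1 := by
    field_simp
    linarith
  constructor
  · intro d hd κ hκ
    have h1 : b / a ≤ (b / a) ^ d := by
      calc b / a = (b / a) ^ (1 : ℤ) := (zpow_one _).symm
        _ ≤ (b / a) ^ d := zpow_le_zpow_right₀ hr.le hd
    have hf1 : (0:ℝ) < (b / a) ^ d - 1 := by linarith
    have hf2 : (0:ℝ) < (b / a) ^ d + 1 - 2 * κ := by
      have := hκ.2
      linarith [hba ▸ h1]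
    exact mul_pos hf1 hf2
  · intro d hd κ hκ
    have h1 : (b / a) ^ d ≤ a / b := by
      calc (b / a) ^ d ≤ (b / a) ^ (-1 : ℤ) := zpow_le_zpow_right₀ hr.le hd
        _ = a / b := by rw [zpow_neg_one, inv_div]
    have habl : a / b < 1 := (div_lt_one hbpos).2 hab
    have hf1 : (b / a) ^ d - 1 < 0 := by linarith
    have hf2 : (b / a) ^ d + 1 - 2 * κ < 0 := by
      have := hκ.1
      linarith [hab' ▸ h1]
    exact mul_pos_of_neg_of_neg hf1 hf2
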